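/- Let θ : D ⥤ C be a partial n-ary operation with domain a full subcategory i : D ↪ C^n, and let θⱼ : Dⱼ ⥤ C be partial kⱼ-ary operations such that (θ₁,…,θₙ) : D₁ × ⋯ × Dₙ ⥤ C^n factors through D via a functor (θ₁,…,θₙ)'. Then the Day extensions satisfy (θ ∘ (θ₁,…,θₙ))_D ≅ θ_D ∘ (θ₁_D, …, θₙ_D) as functors [C ⥤ Type]^{k₁+⋯+kₙ} ⥤ [C ⥤ Type], naturally in all arguments. -/

import Mathlib

open CategoryTheory Opposite

universe u v

namespace DayPaper

variable {B C : Type} [SmallCategory B] [SmallCategory C]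

/-- A point of the coend defining the Day extension (left Kan extension) of a
copresheaf `P` along `θ`, at `c`. -/
structure DayPt (θ : B ⥤ C) (P : B ⥤ Type) (c : C) : Type where
  pt : B
  elt : P.obj pt
  arr : θ.obj pt ⟶ c

/-- The relation generating the coend quotient. -/
def DayRel (θ : B ⥤ C) (P : B ⥤ Type) (c : C) : DayPt θ P c → DayPt θ P c → Prop :=
  fun x y => ∃ f : x.pt ⟶ y.pt, P.map f x.elt = y.elt ∧ x.arr = θ.map f ≫ y.arr

/-- The coend `∫^{b} P(b) × Hom(θ b, c)`. -/
def DayObj (θ : B ⥤ C) (P : B ⥤ Type) (c : C) : Type := Quot (DayRel θ P c)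

/-- The Day extension of a copresheaf `P` along `θ`, as a copresheaf on `C`. -/
def DayCopresheaf (θ : B ⥤ C) (P : B ⥤ Type) : C ⥤ Type where
  obj c := DayObj θ P c
  map {c c'} g := TypeCat.ofHom (Quot.map (fun x => (⟨x.pt, x.elt, x.arr ≫ g⟩ : DayPt θ P c'))
    (by rintro x y ⟨f, h1, h2⟩; exact ⟨f, h1, by dsimp; rw [h2, Category.assoc]⟩))
  map_id c := by
    ext q
    induction q using Quot.ind with
    | _ x => exact congrArg (Quot.mk _) (by rcases x with ⟨b, p, a⟩; simp)
  map_comp {c c' c''} g g' := by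
    ext q
    induction q using Quot.ind with
    | _ x => exact congrArg (Quot.mk _) (by rcases x with ⟨b, p, a⟩; simp)

/-- The Day extension, as a functor on copresheaf categories. -/
def DayExtGen (θ : B ⥤ C) : (B ⥤ Type) ⥤ (C ⥤ Type) where
  obj P := DayCopresheaf θ P
  map {P Q} η :=
    { app := fun c => TypeCat.ofHom (Quot.map
        (fun x => (⟨x.pt, η.app x.pt x.elt, x.arr⟩ : DayPt θ Q c))
        (by
          rintro x y ⟨f, h1, h2⟩
          exact ⟨f, by dsimp; rw [← h1, NatTrans.naturality_apply], h2⟩))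
      naturality := by
        intro c c' g
        ext q
        induction q using Quot.ind with
        | _ x => rfl }
  map_id P := by
    ext c q
    induction q using Quot.ind with
    | _ x => rfl
  map_comp {P Q R} η η' := by
    ext c q
    induction q using Quot.ind with
    | _ x => rfl

variable {ι : Type}

/-- The external product of a family of copresheaves. -/
def extProd (F : ι → (C ⥤ Type)) : (ι → C) ⥤ Type where
  obj x := ∀ i, (F i).obj (x i)
  map f := TypeCat.ofHom fun p => fun i => (F i).map (f i) (p i)
  map_id x := by ext p; simp
  map_comp f g := by ext p; simp

/-- The external product, as a functor. -/
def extProdFunctor (ι : Type) (C : Type) [SmallCategory C] :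
    (ι → (C ⥤ Type)) ⥤ ((ι → C) ⥤ Type) where
  obj := extProd
  map {F G} α :=
    { app := fun x => TypeCat.ofHom fun p => fun i => (α i).app (x i) (p i)
      naturality := by
        intro x y f
        ext p
        funext i
        exact NatTrans.naturality_apply (α i) (f i) (p i) }
  map_id F := by ext x p; rfl
  map_comp α β := by ext x p; rfl

/-- Reindexing of pi-categories along a map of index types. -/
def reindexPi {A : Type u} [Category.{v} A] {ι' ι : Type} (h : ι' → ι) :
    (ι → A) ⥤ (ι' → A) where
  obj x := fun i' => x (h i')
  map f := fun i' => f (h i')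
  map_id _x := rfl
  map_comp _f _g := rfl

/-- The tuple `(θ₁, …, θₙ)` of a family of multi-ary operations. -/
def tupleFunctor {κ : ι → Type} (θs : ∀ i, (κ i → C) ⥤ C) :
    ((Σ i, κ i) → C) ⥤ (ι → C) where
  obj x := fun i => (θs i).obj (fun s => x ⟨i, s⟩)
  map f := fun i => (θs i).map (fun s => f ⟨i, s⟩)
  map_id x := by funext i; exact (θs i).map_id _
  map_comp f g := by funext i; exact (θs i).map_comp _ _

/-- Multi-composition of multi-ary operations on `C`. -/
def mc {κ : ι → Type} (θ : (ι → C) ⥤ C) (θs : ∀ i, (κ i → C) ⥤ C) :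
    ((Σ i, κ i) → C) ⥤ C :=
  tupleFunctor θs ⋙ θ

/-- The Day extension of a (total) `ι`-ary operation. -/
def DayExtFunctor (θ : (ι → C) ⥤ C) : (ι → (C ⥤ Type)) ⥤ (C ⥤ Type) :=
  extProdFunctor ι C ⋙ DayExtGen θ

end DayPaper

open DayPaper CategoryTheory

namespace DayPaper

variable {C : Type} [SmallCategory C] {ι : Type}

/-- The Day extension of a partial `ι`-ary operation `θ : D ⥤ C` whose domain is
a full subcategory `i : D ↪ C^ι`: it sends a family of copresheaves `F` to the
double coend `a ↦ ∫^{d ∈ D} ∫^{c ∈ C^ι} Hom_C(θ d, a) × Hom(c, i d) × ∏ᵢ Fᵢ(cᵢ)`. -/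
def pday {Dm : Type} [SmallCategory Dm] (θ : Dm ⥤ C) (i : Dm ⥤ (ι → C)) :
    (ι → (C ⥤ Type)) ⥤ (C ⥤ Type) :=
  extProdFunctor ι C ⋙ DayExtGen (𝟭 (ι → C)) ⋙
    (Functor.whiskeringLeft Dm (ι → C) Type).obj i ⋙ DayExtGen θ

/-- The tuple `(θ₁, …, θₙ)` of a family of partial operations, as a functor
from the product of the domains to `C^ι`. -/
def tupleP {Dk : ι → Type} [∀ j, SmallCategory (Dk j)]
    (θs : ∀ j, Dk j ⥤ C) : (∀ j, Dk j) ⥤ (ι → C) where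
  obj x := fun j => (θs j).obj (x j)
  map f := fun j => (θs j).map (f j)
  map_id x := by funext j; exact (θs j).map_id _
  map_comp f g := by funext j; exact (θs j).map_comp _ _

/-- The inclusion of the product of the domains of a family of partial
operations into `C^{Σ κ}`. -/
def sigmaIncl {κ : ι → Type} {Dk : ι → Type} [∀ j, SmallCategory (Dk j)]
    (is : ∀ j, Dk j ⥤ (κ j → C)) : (∀ j, Dk j) ⥤ ((Σ j, κ j) → C) where
  obj x := fun p => (is p.1).obj (x p.1) p.2
  map f := fun p => (is p.1).map (f p.1) p.2
  map_id x := by funext p; exact congrFun ((is p.1).map_id (x p.1)) p.2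
  map_comp f g := by funext p; exact congrFun ((is p.1).map_comp (f p.1) (g p.1)) p.2

end DayPaper

open DayPaper CategoryTheory

namespace DayPaper

section Aux

open CategoryTheory

universe w w2

/-- A function on tuples which is invariant under updating a single coordinate by a
relation is invariant under pointwise `Quot.mk`-equality. -/
theorem pi_quot_invariance {ι : Type} [Fintype ι] [DecidableEq ι] {β : ι → Type w}
    {α : Sort w2} (r : ∀ j, β j → β j → Prop) (Φ : (∀ j, β j) → α)
    (h : ∀ (q : ∀ j, β j) (j0 : ι) (x y : β j0), r j0 x y →
      Φ (Function.update q j0 x) = Φ (Function.update q j0 y))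
    (q q' : ∀ j, β j) (hq : ∀ j, Quot.mk (r j) (q j) = Quot.mk (r j) (q' j)) :
    Φ q = Φ q' := by
  have h' : ∀ (q : ∀ j, β j) (j0 : ι) (x y : β j0), Relation.EqvGen (r j0) x y →
      Φ (Function.update q j0 x) = Φ (Function.update q j0 y) := by
    intro q j0 x y hxy
    induction hxy with
    | rel x y hr => exact h q j0 x y hr
    | refl x => rfl
    | symm x y _ ih => exact ih.symm
    | trans x y z _ _ ih1 ih2 => exact ih1.trans ih2
  have key : ∀ s : Finset ι, ∀ q q' : ∀ j, β j,
      (∀ j, Relation.EqvGen (r j) (q j) (q' j)) → (∀ j ∉ s, q j = q' j) → Φ q = Φ q' := by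
    intro s
    induction s using Finset.induction_on with
    | empty =>
      intro q q' _ h2
      have : q = q' := funext fun j => h2 j (Finset.notMem_empty j)
      rw [this]
    | @insert j0 s hj0 ih =>
      intro q q' hE h2
      have step1 : Φ q = Φ (Function.update q j0 (q' j0)) := by
        conv_lhs => rw [← Function.update_eq_self j0 q]
        exact h' q j0 (q j0) (q' j0) (hE j0)
      rw [step1]
      apply ih
      · intro j
        by_cases hj : j = j0
        · subst hj; rw [Function.update_self]; exact Relation.EqvGen.refl _
        · rw [Function.update_of_ne hj]; exact hE j
      · intro j hjs
        by_cases hj : j = j0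
        · subst hj; rw [Function.update_self]
        · rw [Function.update_of_ne hj]
          exact h2 j (by simp [Finset.mem_insert, hj, hjs])
  exact key Finset.univ q q' (fun j => Quot.eqvGen_exact (hq j))
    (fun j hj => absurd (Finset.mem_univ j) hj)

variable {B C : Type} [SmallCategory B] [SmallCategory C]

theorem dayRel_refl (θ : B ⥤ C) (P : B ⥤ Type) (c : C) (x : DayPt θ P c) :
    DayRel θ P c x x :=
  ⟨𝟙 x.pt, by simp, by simp⟩

theorem pi_eqToHom_app {ι : Type} {D : ι → Type w} [∀ j, Category.{w2} (D j)]
    {x y : ∀ j, D j} (h : x = y) (j : ι) :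
    (eqToHom h : x ⟶ y) j = eqToHom (congrFun h j) := by
  subst h; rfl

theorem pi_eqToHom_funext {ι : Type} {D : ι → Type w} [∀ j, Category.{w2} (D j)]
    {x y : ∀ j, D j} (h : x = y) :
    (fun j => eqToHom (congrFun h j)) = (eqToHom h : x ⟶ y) := by
  subst h; rfl

/-- The iso `DayObj (𝟭 B) P c ≅ P.obj c`. -/
def dayUnitObjIso (P : B ⥤ Type) (c : B) : DayObj (𝟭 B) P c ≅ P.obj c where
  hom := TypeCat.ofHom (Quot.lift (fun x : DayPt (𝟭 B) P c => P.map x.arr x.elt) (by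
    rintro x y ⟨f, h1, h2⟩
    dsimp at h2 ⊢
    rw [h2, ← h1, ← Functor.map_comp_apply]))
  inv := TypeCat.ofHom fun p => Quot.mk _ (⟨c, p, 𝟙 c⟩ : DayPt (𝟭 B) P c)
  hom_inv_id := by
    ext q
    induction q using Quot.ind with
    | _ x =>
      show Quot.mk _ ⟨c, P.map x.arr x.elt, 𝟙 c⟩ = Quot.mk _ x
      exact (Quot.sound ⟨x.arr, rfl, by simp⟩).symm
  inv_hom_id := by
    ext p
    show P.map (𝟙 c) p = p
    simp

/-- The Day extension along the identity is isomorphic to the identity. -/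
def dayUnitIso (B : Type) [SmallCategory B] : DayExtGen (𝟭 B) ≅ 𝟭 (B ⥤ Type) :=
  NatIso.ofComponents
    (fun P => NatIso.ofComponents (fun c => dayUnitObjIso P c) (by
      intro c c' g
      ext q
      induction q using Quot.ind with
      | _ x =>
        show P.map (x.arr ≫ g) x.elt = P.map g (P.map x.arr x.elt)
        rw [FunctorToTypes.map_comp_apply]))
    (by
      intro P Q η
      ext c q
      induction q using Quot.ind with
      | _ x =>
        show Q.map x.arr (η.app x.pt x.elt) = η.app c (P.map x.arr x.elt)
        exact (NatTrans.naturality_apply η x.arr x.elt).symm)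

variable (C) in
/-- A simplified form of `pday` (without the identity Day extension layer). -/
def spday {ι : Type} {Dm : Type} [SmallCategory Dm] (θ : Dm ⥤ C) (i : Dm ⥤ (ι → C)) :
    (ι → (C ⥤ Type)) ⥤ (C ⥤ Type) :=
  extProdFunctor ι C ⋙ (Functor.whiskeringLeft Dm (ι → C) Type).obj i ⋙ DayExtGen θ

/-- `pday` agrees with its simplified form. -/
def pdayIsoSpday {ι : Type} {Dm : Type} [SmallCategory Dm] (θ : Dm ⥤ C) (i : Dm ⥤ (ι → C)) :
    pday θ i ≅ spday C θ i :=
  Functor.isoWhiskerLeft (extProdFunctor ι C)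
    (Functor.isoWhiskerRight (dayUnitIso (ι → C))
      ((Functor.whiskeringLeft Dm (ι → C) Type).obj i ⋙ DayExtGen θ) ≪≫ Functor.leftUnitor _)

/-- Componentwise natural isomorphisms assemble to an isomorphism of `Functor.pi'`s. -/
def piNatIso {A : Type w} [Category.{w2} A] {J : Type} {D : J → Type u}
    [∀ j, Category.{v} (D j)] {G H : ∀ j, A ⥤ D j} (e : ∀ j, G j ≅ H j) :
    Functor.pi' G ≅ Functor.pi' H :=
  NatIso.ofComponents
    (fun X =>
      { hom := fun j => (e j).hom.app X
        inv := fun j => (e j).inv.app X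
        hom_inv_id := by funext j; exact (e j).hom_inv_id_app X
        inv_hom_id := by funext j; exact (e j).inv_hom_id_app X })
    (by intro X Y f; funext j; exact (e j).hom.naturality f)

end Aux

end DayPaper


namespace DayPaper

noncomputable section MainConstruction
set_option linter.unusedSectionVars false

open CategoryTheory

theorem dayCopresheaf_map_mk {B C : Type} [SmallCategory B] [SmallCategory C]
    (θ : B ⥤ C) (P : B ⥤ Type) {c c' : C} (g : c ⟶ c') (x : DayPt θ P c) :
    (DayCopresheaf θ P).map g (Quot.mk _ x) = Quot.mk _ ⟨x.pt, x.elt, x.arr ≫ g⟩ := rfl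

theorem extProd_map_apply {C : Type} [SmallCategory C] {ι : Type} (F : ι → (C ⥤ Type))
    {x y : ι → C} (f : x ⟶ y) (p : ∀ j, (F j).obj (x j)) (j : ι) :
    (extProd F).map f p j = (F j).map (f j) (p j) := rfl

variable {C : Type} [SmallCategory C] {n : ℕ} {κ : Fin n → ℕ}
  {Dm : Type} [SmallCategory Dm] (i : Dm ⥤ (Fin n → C)) [i.Full] [i.Faithful]
  (θ : Dm ⥤ C)
  {Dk : Fin n → Type} [∀ j, SmallCategory (Dk j)]
  (is : ∀ j, Dk j ⥤ (Fin (κ j) → C))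
  (θs : ∀ j, Dk j ⥤ C)
  (t : (∀ j, Dk j) ⥤ Dm) (hfac : t ⋙ i = tupleP θs)
  (F : (Σ j, Fin (κ j)) → (C ⥤ Type))

/-- The inner copresheaf at index `j`. -/
abbrev PinP (j : Fin n) : Dk j ⥤ Type := is j ⋙ extProd (fun s => F ⟨j, s⟩)

/-- The family of inner Day extensions. -/
abbrev GfamP : Fin n → (C ⥤ Type) :=
  fun j => DayCopresheaf (θs j) (PinP is F j)

variable (a : C)

/-- Forward map on coend points. -/
def phiRaw (x : DayPt (t ⋙ θ) (sigmaIncl is ⋙ extProd F) a) :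
    DayPt θ (i ⋙ extProd (GfamP is θs F)) a where
  pt := t.obj x.pt
  elt := fun j => Quot.mk _
    ⟨x.pt j, fun s => x.elt ⟨j, s⟩,
      eqToHom (congrFun (Functor.congr_obj hfac x.pt) j).symm⟩
  arr := x.arr

theorem phiRaw_rel {x y : DayPt (t ⋙ θ) (sigmaIncl is ⋙ extProd F) a}
    (hxy : DayRel (t ⋙ θ) (sigmaIncl is ⋙ extProd F) a x y) :
    DayRel θ (i ⋙ extProd (GfamP is θs F)) a
      (phiRaw i θ is θs t hfac F a x) (phiRaw i θ is θs t hfac F a y) := by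
  obtain ⟨f, h1, h2⟩ := hxy
  refine ⟨t.map f, ?_, h2⟩
  funext j
  have hB : (eqToHom (congrFun (Functor.congr_obj hfac x.pt) j).symm ≫ (i.map (t.map f)) j :
        (θs j).obj (x.pt j) ⟶ (i.obj (t.obj y.pt)) j)
      = (θs j).map (f j) ≫ eqToHom (congrFun (Functor.congr_obj hfac y.pt) j).symm := by
    have hc : (i.map (t.map f)) j = ((t ⋙ i).map f) j := rfl
    rw [hc, Functor.congr_hom hfac f, Pi.comp_apply, Pi.comp_apply,
      pi_eqToHom_app, pi_eqToHom_app]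
    erw [eqToHom_trans_assoc, eqToHom_refl, Category.id_comp]
    rfl
  have hA : (PinP is F j).map (f j) (fun s => x.elt ⟨j, s⟩) = (fun s => y.elt ⟨j, s⟩) := by
    funext s; exact congrFun h1 ⟨j, s⟩
  show (extProd (GfamP is θs F)).map (i.map (t.map f)) (phiRaw i θ is θs t hfac F a x).elt j
      = (phiRaw i θ is θs t hfac F a y).elt j
  erw [extProd_map_apply]
  show (DayCopresheaf (θs j) (PinP is F j)).map ((i.map (t.map f)) j) (Quot.mk _ _) = _
  rw [dayCopresheaf_map_mk]
  exact Quot.sound ⟨f j, hA, hB⟩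

/-- The forward map on coends. -/
def phi : DayObj (t ⋙ θ) (sigmaIncl is ⋙ extProd F) a →
    DayObj θ (i ⋙ extProd (GfamP is θs F)) a :=
  Quot.map (phiRaw i θ is θs t hfac F a) (fun _ _ h => phiRaw_rel i θ is θs t hfac F a h)

/-- The canonical comparison map used in the inverse construction. -/
def gArr (d : Dm) (q : ∀ j, DayPt (θs j) (PinP is F j) (i.obj d j)) :
    i.obj (t.obj fun j => (q j).pt) ⟶ i.obj d :=
  eqToHom (Functor.congr_obj hfac fun j => (q j).pt) ≫
    (fun j => (q j).arr : (tupleP θs).obj (fun j => (q j).pt) ⟶ i.obj d)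

/-- The inverse map on raw data. -/
def Phi (d : Dm) (arr : θ.obj d ⟶ a) (q : ∀ j, DayPt (θs j) (PinP is F j) (i.obj d j)) :
    DayObj (t ⋙ θ) (sigmaIncl is ⋙ extProd F) a :=
  Quot.mk _ ⟨fun j => (q j).pt, fun p => (q p.1).elt p.2,
    θ.map (i.preimage (gArr i is θs t hfac F d q)) ≫ arr⟩

theorem Phi_rel (d : Dm) (arr : θ.obj d ⟶ a)
    (q q' : ∀ j, DayPt (θs j) (PinP is F j) (i.obj d j))
    (h : ∀ j, DayRel (θs j) (PinP is F j) (i.obj d j) (q j) (q' j)) :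
    Phi i θ is θs t hfac F a d arr q = Phi i θ is θs t hfac F a d arr q' := by
  choose f h1 h2 using h
  have hpre : i.preimage (gArr i is θs t hfac F d q)
      = t.map f ≫ i.preimage (gArr i is θs t hfac F d q') := by
    apply i.map_injective
    rw [Functor.map_comp, Functor.map_preimage, Functor.map_preimage]
    show gArr i is θs t hfac F d q = ((t ⋙ i).map f) ≫ gArr i is θs t hfac F d q'
    rw [Functor.congr_hom hfac f]
    dsimp only [gArr]
    simp only [Category.assoc, eqToHom_trans_assoc, eqToHom_refl, Category.id_comp]
    erw [eqToHom_trans_assoc, eqToHom_refl, Category.id_comp]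
    congr 1
    funext j
    erw [Pi.comp_apply]
    exact h2 j
  apply Quot.sound
  refine ⟨f, ?_, ?_⟩
  · funext p
    exact congrFun (h1 p.1) p.2
  · show θ.map (i.preimage (gArr i is θs t hfac F d q)) ≫ arr
      = (t ⋙ θ).map f ≫ θ.map (i.preimage (gArr i is θs t hfac F d q')) ≫ arr
    rw [hpre, Functor.map_comp]
    simp [Category.assoc]

theorem Phi_quot (d : Dm) (arr : θ.obj d ⟶ a)
    (q q' : ∀ j, DayPt (θs j) (PinP is F j) (i.obj d j))
    (hq : ∀ j, Quot.mk (DayRel (θs j) (PinP is F j) (i.obj d j)) (q j)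
      = Quot.mk (DayRel (θs j) (PinP is F j) (i.obj d j)) (q' j)) :
    Phi i θ is θs t hfac F a d arr q = Phi i θ is θs t hfac F a d arr q' := by
  refine pi_quot_invariance (fun j => DayRel (θs j) (PinP is F j) (i.obj d j))
    (Phi i θ is θs t hfac F a d arr) ?_ q q' hq
  intro q j0 u v huv
  apply Phi_rel
  intro j
  by_cases hj : j = j0
  · subst hj
    rw [Function.update_self, Function.update_self]
    exact huv
  · rw [Function.update_of_ne hj, Function.update_of_ne hj]
    exact dayRel_refl _ _ _ _

/-- The inverse map on coend points. -/
def psiRaw (z : DayPt θ (i ⋙ extProd (GfamP is θs F)) a) :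
    DayObj (t ⋙ θ) (sigmaIncl is ⋙ extProd F) a :=
  Phi i θ is θs t hfac F a z.pt z.arr (fun j => (z.elt j).out)

theorem psiRaw_rel {z z' : DayPt θ (i ⋙ extProd (GfamP is θs F)) a}
    (hzz' : DayRel θ (i ⋙ extProd (GfamP is θs F)) a z z') :
    psiRaw i θ is θs t hfac F a z = psiRaw i θ is θs t hfac F a z' := by
  obtain ⟨f, h1, h2⟩ := hzz'
  set q : ∀ j, DayPt (θs j) (PinP is F j) (i.obj z.pt j) := fun j => (z.elt j).out with hqdef
  set qh : ∀ j, DayPt (θs j) (PinP is F j) (i.obj z'.pt j) :=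
    fun j => ⟨(q j).pt, (q j).elt, (q j).arr ≫ (i.map f) j⟩ with hqhdef
  have key : Phi i θ is θs t hfac F a z'.pt z'.arr (fun j => (z'.elt j).out)
      = Phi i θ is θs t hfac F a z'.pt z'.arr qh := by
    apply Phi_quot
    intro j
    refine (Quot.out_eq (z'.elt j)).trans ((congrFun h1 j).symm.trans ?_)
    show (GfamP is θs F j).map ((i.map f) j) (z.elt j) = _
    rw [← Quot.out_eq (z.elt j)]
    rfl
  have harr : θ.map (i.preimage (gArr i is θs t hfac F z.pt q)) ≫ z.arr
      = θ.map (i.preimage (gArr i is θs t hfac F z'.pt qh)) ≫ z'.arr := by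
    have hpre : i.preimage (gArr i is θs t hfac F z.pt q) ≫ f
        = i.preimage (gArr i is θs t hfac F z'.pt qh) := by
      apply i.map_injective
      rw [Functor.map_comp, Functor.map_preimage, Functor.map_preimage]
      dsimp only [gArr]
      erw [Category.assoc]
      congr 1
    rw [h2, ← Category.assoc, ← Functor.map_comp, hpre]
  show Phi i θ is θs t hfac F a z.pt z.arr q
      = Phi i θ is θs t hfac F a z'.pt z'.arr (fun j => (z'.elt j).out)
  rw [key]
  dsimp only [Phi]
  rw [harr]

/-- The inverse map on coends. -/
def psi : DayObj θ (i ⋙ extProd (GfamP is θs F)) a →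
    DayObj (t ⋙ θ) (sigmaIncl is ⋙ extProd F) a :=
  Quot.lift (psiRaw i θ is θs t hfac F a) (fun _ _ h => psiRaw_rel i θ is θs t hfac F a h)

theorem psi_phi (x : DayPt (t ⋙ θ) (sigmaIncl is ⋙ extProd F) a) :
    psi i θ is θs t hfac F a (phi i θ is θs t hfac F a (Quot.mk _ x)) = Quot.mk _ x := by
  show psiRaw i θ is θs t hfac F a (phiRaw i θ is θs t hfac F a x) = Quot.mk _ x
  dsimp only [psiRaw, phiRaw]
  set qe : ∀ j, DayPt (θs j) (PinP is F j) (i.obj (t.obj x.pt) j) :=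
    fun j => ⟨x.pt j, fun s => x.elt ⟨j, s⟩,
      eqToHom (congrFun (Functor.congr_obj hfac x.pt) j).symm⟩ with hqe
  have step : Phi i θ is θs t hfac F a (t.obj x.pt) x.arr
        (fun j => (Quot.mk (DayRel (θs j) (PinP is F j) (i.obj (t.obj x.pt) j)) (qe j)).out)
      = Phi i θ is θs t hfac F a (t.obj x.pt) x.arr qe := by
    apply Phi_quot
    intro j
    rw [Quot.out_eq]
  rw [step]
  have hg : gArr i is θs t hfac F (t.obj x.pt) qe = 𝟙 _ := by
    dsimp only [gArr]
    have : (fun j => (qe j).arr : (tupleP θs).obj (fun j => (qe j).pt) ⟶ i.obj (t.obj x.pt))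
        = eqToHom (Functor.congr_obj hfac x.pt).symm := by
      exact pi_eqToHom_funext (Functor.congr_obj hfac x.pt).symm
    rw [this]
    simp [eqToHom_trans]
  dsimp only [Phi]
  rw [hg, Functor.preimage_id]
  simp
  rfl

theorem phi_psi (z : DayPt θ (i ⋙ extProd (GfamP is θs F)) a) :
    phi i θ is θs t hfac F a (psi i θ is θs t hfac F a (Quot.mk _ z)) = Quot.mk _ z := by
  show phi i θ is θs t hfac F a (psiRaw i θ is θs t hfac F a z) = Quot.mk _ z
  dsimp only [psiRaw, Phi, phi]
  set q : ∀ j, DayPt (θs j) (PinP is F j) (i.obj z.pt j) := fun j => (z.elt j).out with hq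
  set f0 : t.obj (fun j => (q j).pt) ⟶ z.pt := i.preimage (gArr i is θs t hfac F z.pt q) with hf0
  show Quot.mk _ (phiRaw i θ is θs t hfac F a ⟨fun j => (q j).pt, fun p => (q p.1).elt p.2,
    θ.map f0 ≫ z.arr⟩) = Quot.mk _ z
  apply Quot.sound
  refine ⟨f0, ?_, rfl⟩
  funext j
  have hcomp : (i.map f0) j = eqToHom (congrFun
      (Functor.congr_obj hfac (fun j => (q j).pt)) j) ≫ (q j).arr := by
    have h1 : i.map f0 = gArr i is θs t hfac F z.pt q := i.map_preimage _
    have h2 : (gArr i is θs t hfac F z.pt q) j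
        = (eqToHom (Functor.congr_obj hfac (fun j => (q j).pt))) j ≫ (q j).arr := rfl
    rw [h1, h2, pi_eqToHom_app]
  show (extProd (GfamP is θs F)).map (i.map f0)
      (phiRaw i θ is θs t hfac F a ⟨fun j => (q j).pt, fun p => (q p.1).elt p.2,
        θ.map f0 ≫ z.arr⟩).elt j = z.elt j
  erw [extProd_map_apply]
  show (DayCopresheaf (θs j) (PinP is F j)).map ((i.map f0) j) (Quot.mk _ _) = z.elt j
  rw [dayCopresheaf_map_mk, ← Quot.out_eq (z.elt j)]
  refine congrArg (Quot.mk _) ?_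
  show DayPt.mk (q j).pt (fun s => (q j).elt s)
      (eqToHom (congrFun (Functor.congr_obj hfac (fun j => (q j).pt)) j).symm ≫ (i.map f0) j)
    = q j
  rw [hcomp]
  erw [eqToHom_trans_assoc, eqToHom_refl, Category.id_comp]

/-- The component of the main isomorphism at a family of copresheaves. -/
def mainIsoObj : (spday C (t ⋙ θ) (sigmaIncl is)).obj F ≅
    ((Functor.pi' fun j => reindexPi (Sigma.mk j) ⋙ spday C (θs j) (is j)) ⋙ spday C θ i).obj F :=
  NatIso.ofComponents
    (fun a =>
      { hom := TypeCat.ofHom (phi i θ is θs t hfac F a)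
        inv := TypeCat.ofHom (psi i θ is θs t hfac F a)
        hom_inv_id := by
          ext x
          induction x using Quot.ind with
          | _ x => exact psi_phi i θ is θs t hfac F a x
        inv_hom_id := by
          ext z
          induction z using Quot.ind with
          | _ z => exact phi_psi i θ is θs t hfac F a z })
    (by
      intro a a' g
      ext x
      induction x using Quot.ind with
      | _ x => rfl)

/-- The main isomorphism, between the simplified partial Day extensions. -/
def mainIso : spday C (t ⋙ θ) (sigmaIncl is) ≅
    (Functor.pi' fun j => reindexPi (Sigma.mk j) ⋙ spday C (θs j) (is j)) ⋙ spday C θ i :=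
  NatIso.ofComponents (fun F => mainIsoObj i θ is θs t hfac F)
    (by
      intro F F' η
      apply NatTrans.ext
      funext a
      ext x
      induction x using Quot.ind with
      | _ x => rfl)

end MainConstruction

end DayPaper


/-- Day extension of a multi-composite of partial operations.  If the tuple
`(θ₁,…,θₙ)` of partial operations factors through the (full) domain `D` of the
partial operation `θ` via `t`, then the Day extension of the composite partial
operation (with underlying functor `t ⋙ θ` and domain `D₁ × ⋯ × Dₙ ⊆ C^{Σκ}`)
is naturally isomorphic to the multi-composite of the Day extensions. -/
theorem dayExtension_partial_multicomposite (C : Type) [SmallCategory C]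
    (n : ℕ) (κ : Fin n → ℕ)
    (Dm : Type) [SmallCategory Dm] (i : Dm ⥤ (Fin n → C)) [i.Full] [i.Faithful]
    (θ : Dm ⥤ C)
    (Dk : Fin n → Type) [∀ j, SmallCategory (Dk j)]
    (is : ∀ j, Dk j ⥤ (Fin (κ j) → C)) [∀ j, (is j).Full] [∀ j, (is j).Faithful]
    (θs : ∀ j, Dk j ⥤ C)
    (t : (∀ j, Dk j) ⥤ Dm) (hfac : t ⋙ i = tupleP θs) :
    Nonempty (pday (t ⋙ θ) (sigmaIncl is) ≅
      (Functor.pi' fun j => reindexPi (Sigma.mk j) ⋙ pday (θs j) (is j)) ⋙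
        pday θ i) := by
  refine ⟨?_⟩
  exact pdayIsoSpday (t ⋙ θ) (sigmaIncl is) ≪≫ mainIso i θ is θs t hfac ≪≫
    Functor.isoWhiskerRight (piNatIso fun j =>
      Functor.isoWhiskerLeft (reindexPi (Sigma.mk j)) (pdayIsoSpday (θs j) (is j))).symm (spday C θ i) ≪≫
    Functor.isoWhiskerLeft (Functor.pi' fun j => reindexPi (Sigma.mk j) ⋙ pday (θs j) (is j))
      (pdayIsoSpday θ i).symm
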